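/- If commuting elements h_0 = 1, h_1, h_2, ... of a commutative ring satisfy the relations Σ_{a+b=r}(-1)^a e_a h_b = 0 for all r ≥ 1, where e_a := det(h_{1-i+j})_{1≤i,j≤a}, then conversely h_r = det(e_{1-i+j})_{1≤i,j≤r} for all r ≥ 1 (the dual Jacobi-Trudi relation). -/

import Mathlib

open Finset

private lemma djt_minor {R : Type*} [CommRing R] (e : ℕ → R) (eZ : ℤ → R)
    (heZ : ∀ m : ℤ, eZ m = if 0 ≤ m then e m.toNat else 0) (e0 : e 0 = 1)
    (n : ℕ) (i : Fin (n + 1)) :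
    (Matrix.of fun k l : Fin n => eZ (1 + (l : ℤ) - ((i.succAbove k : Fin (n + 1)) : ℤ))).det
      = (Matrix.of fun k l : Fin (i : ℕ) => eZ (1 + (l : ℤ) - (k : ℤ))).det := by
  obtain ⟨m, hm⟩ : ∃ m, (i : ℕ) + m = n := ⟨n - i, by omega⟩
  set σ : Fin (i : ℕ) ⊕ Fin m ≃ Fin n := finSumFinEquiv.trans (finCongr hm) with hσ
  have key : (Matrix.of fun k l : Fin n =>
        eZ (1 + (l : ℤ) - ((i.succAbove k : Fin (n + 1)) : ℤ))).submatrix σ σ =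
      Matrix.fromBlocks
        (Matrix.of fun k l : Fin (i : ℕ) => eZ (1 + (l : ℤ) - (k : ℤ)))
        (Matrix.of fun (k : Fin (i:ℕ)) (l : Fin m) => eZ (1 + ((i : ℤ) + (l:ℤ)) - (k : ℤ)))
        0
        (Matrix.of fun k l : Fin m => eZ ((l : ℤ) - (k : ℤ))) := by
    ext k l
    have hval : ∀ k : Fin n, ((i.succAbove k : Fin (n+1)) : ℕ)
        = if (k : ℕ) < (i : ℕ) then (k : ℕ) else (k : ℕ) + 1 := by
      intro k
      rcases lt_or_ge (k.castSucc) i with hk | hk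
      · rw [Fin.succAbove_of_castSucc_lt _ _ hk, Fin.coe_castSucc,
          if_pos (by simpa [Fin.lt_iff_val_lt_val] using hk)]
      · rw [Fin.succAbove_of_le_castSucc _ _ hk, Fin.val_succ,
          if_neg (by simp [Fin.le_iff_val_le_val] at hk; omega)]
    cases k with
    | inl k =>
      cases l with
      | inl l =>
        simp only [Matrix.submatrix_apply, Matrix.fromBlocks_apply₁₁, Matrix.of_apply, hσ]
        have h1 : ((σ (Sum.inl k) : ℕ)) = (k : ℕ) := by simp [hσ]
        rw [hval]
        have h2 : ((σ (Sum.inl l) : ℕ)) = (l : ℕ) := by simp [hσ]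
        rw [h1, h2, if_pos (by omega)]
      | inr l =>
        simp only [Matrix.submatrix_apply, Matrix.fromBlocks_apply₁₂, Matrix.of_apply, hσ]
        have h1 : ((σ (Sum.inl k) : ℕ)) = (k : ℕ) := by simp [hσ]
        have h2 : ((σ (Sum.inr l) : ℕ)) = (i : ℕ) + (l : ℕ) := by simp [hσ]
        rw [hval, h1, h2, if_pos (by omega)]
        push_cast; ring_nf
    | inr k =>
      cases l with
      | inl l =>
        simp only [Matrix.submatrix_apply, Matrix.fromBlocks_apply₂₁, Matrix.of_apply, hσ]
        have h1 : ((σ (Sum.inr k) : ℕ)) = (i : ℕ) + (k : ℕ) := by simp [hσ]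
        have h2 : ((σ (Sum.inl l) : ℕ)) = (l : ℕ) := by simp [hσ]
        rw [hval, h1, h2, if_neg (by omega), heZ, if_neg (by push_cast; omega)]
        simp
      | inr l =>
        simp only [Matrix.submatrix_apply, Matrix.fromBlocks_apply₂₂, Matrix.of_apply, hσ]
        have h1 : ((σ (Sum.inr k) : ℕ)) = (i : ℕ) + (k : ℕ) := by simp [hσ]
        have h2 : ((σ (Sum.inr l) : ℕ)) = (i : ℕ) + (l : ℕ) := by simp [hσ]
        rw [hval, h1, h2, if_neg (by omega)]
        congr 1; push_cast; ring
  calc (Matrix.of fun k l : Fin n =>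
        eZ (1 + (l : ℤ) - ((i.succAbove k : Fin (n + 1)) : ℤ))).det
      = ((Matrix.of fun k l : Fin n =>
        eZ (1 + (l : ℤ) - ((i.succAbove k : Fin (n + 1)) : ℤ))).submatrix σ σ).det :=
        (Matrix.det_submatrix_equiv_self σ _).symm
    _ = _ := by
        rw [key, Matrix.det_fromBlocks_zero₂₁]
        have : (Matrix.of fun k l : Fin m => eZ ((l : ℤ) - (k : ℤ))).det = 1 := by
          rw [Matrix.det_of_upperTriangular]
          · have : ∀ k : Fin m, eZ ((k : ℤ) - (k : ℤ)) = 1 := by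
              intro k; rw [sub_self, heZ, if_pos le_rfl]; simpa using e0
            simp only [Matrix.of_apply]
            rw [Finset.prod_congr rfl fun k _ => this k]
            exact Finset.prod_const_one
          · intro k l hkl
            have hlk : (l : ℕ) < (k : ℕ) := hkl
            show eZ ((l : ℤ) - (k : ℤ)) = 0
            rw [heZ, if_neg (by omega)]
        rw [this, mul_one]

/-- Dual Jacobi–Trudi relation: if elements `h_0 = 1, h_1, h_2, …` of a commutative
ring satisfy `Σ_{a+b=r}(-1)^a e_a h_b = 0` for all `r ≥ 1`, where
`e_a := det(h_{1-i+j})_{1≤i,j≤a}` (with `h_m = 0` for `m < 0`), then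
`h_r = det(e_{1-i+j})_{1≤i,j≤r}` for all `r ≥ 1` (with `e_m = 0` for `m < 0`). -/
theorem dual_jacobi_trudi {R : Type*} [CommRing R] (h : ℕ → R) (h0 : h 0 = 1)
    (hZ : ℤ → R) (hhZ : ∀ m : ℤ, hZ m = if 0 ≤ m then h m.toNat else 0)
    (e : ℕ → R)
    (he : ∀ a : ℕ, e a = (Matrix.of fun i j : Fin a => hZ (1 + (j : ℤ) - (i : ℤ))).det)
    (eZ : ℤ → R) (heZ : ∀ m : ℤ, eZ m = if 0 ≤ m then e m.toNat else 0)
    (hrel : ∀ r : ℕ, 1 ≤ r →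
      ∑ a ∈ Finset.range (r + 1), (-1 : R) ^ a * e a * h (r - a) = 0) :
    ∀ r : ℕ, 1 ≤ r →
      h r = (Matrix.of fun i j : Fin r => eZ (1 + (j : ℤ) - (i : ℤ))).det := by
  have e0 : e 0 = 1 := by rw [he 0]; exact Matrix.det_fin_zero
  let D : ℕ → R := fun r => (Matrix.of fun i j : Fin r => eZ (1 + (j : ℤ) - (i : ℤ))).det
  have Ddef : ∀ r, D r = (Matrix.of fun i j : Fin r => eZ (1 + (j : ℤ) - (i : ℤ))).det :=
    fun r => rfl
  -- sign parity helper
  have hsign : ∀ a n : ℕ, a ≤ n → (-1 : R) ^ (n - a + n) = (-1) ^ a := by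
    intro a n hle
    have h2 : (n - a + n) + a = 2 * n := by omega
    have h1 : (-1 : R) ^ (n - a + n) * (-1 : R) ^ a = 1 := by
      rw [← pow_add, h2, pow_mul]; simp
    have h3 : (-1 : R) ^ a * (-1 : R) ^ a = 1 := by
      rw [← pow_add, ← two_mul, pow_mul]; simp
    calc (-1 : R) ^ (n - a + n) = (-1) ^ (n - a + n) * ((-1) ^ a * (-1) ^ a) := by
          rw [h3, mul_one]
      _ = ((-1) ^ (n - a + n) * (-1) ^ a) * (-1) ^ a := by ring
      _ = (-1) ^ a := by rw [h1, one_mul]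
  -- recursion for D via cofactor expansion along the last column
  have Drec : ∀ n : ℕ, D (n + 1)
      = ∑ a ∈ Finset.range (n + 1), (-1 : R) ^ a * e (a + 1) * D (n - a) := by
    intro n
    have step : ∀ i : Fin (n + 1),
        ((Matrix.of fun i j : Fin (n + 1) => eZ (1 + (j : ℤ) - (i : ℤ))).submatrix
          i.succAbove Fin.castSucc).det = D (i : ℕ) := by
      intro i
      have h1 : (Matrix.of fun i j : Fin (n + 1) => eZ (1 + (j : ℤ) - (i : ℤ))).submatrix
          i.succAbove Fin.castSucc
          = Matrix.of fun k l : Fin n =>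
              eZ (1 + (l : ℤ) - ((i.succAbove k : Fin (n + 1)) : ℤ)) := by
        ext k l
        simp [Matrix.submatrix_apply]
      rw [h1, djt_minor e eZ heZ e0 n i, Ddef]
    have expand := Matrix.det_succ_column
      (Matrix.of fun i j : Fin (n + 1) => eZ (1 + (j : ℤ) - (i : ℤ))) (Fin.last n)
    rw [Fin.succAbove_last] at expand
    have key : D (n + 1) = ∑ i ∈ Finset.range (n + 1),
        (-1 : R) ^ (i + n) * e (n + 1 - i) * D i := by
      rw [Ddef, expand, ← Fin.sum_univ_eq_sum_range
        (fun i => (-1 : R) ^ (i + n) * e (n + 1 - i) * D i) (n + 1)]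
      refine Finset.sum_congr rfl fun i _ => ?_
      rw [step i]
      have hi : (i : ℕ) ≤ n := by omega
      simp only [Fin.val_last, Matrix.of_apply]
      rw [heZ, if_pos (by omega)]
      have hto : (1 + (n : ℤ) - ((i : ℕ) : ℤ)).toNat = n + 1 - (i : ℕ) := by omega
      rw [hto]
    rw [key, ← Finset.sum_range_reflect
      (fun i => (-1 : R) ^ (i + n) * e (n + 1 - i) * D i) (n + 1)]
    refine Finset.sum_congr rfl fun a ha => ?_
    simp only [Finset.mem_range] at ha
    have ha' : a ≤ n := by omega
    have e1 : n + 1 - 1 - a = n - a := by omega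
    have e2 : n + 1 - (n - a) = a + 1 := by omega
    rw [e1, e2, hsign a n ha']
  -- recursion for h from the given relation
  have hrec : ∀ n : ℕ, h (n + 1)
      = ∑ a ∈ Finset.range (n + 1), (-1 : R) ^ a * e (a + 1) * h (n - a) := by
    intro n
    have H := hrel (n + 1) (by omega)
    rw [Finset.sum_range_succ'] at H
    simp only [pow_zero, one_mul, e0, Nat.sub_zero] at H
    have step : ∀ a, (-1 : R) ^ (a + 1) * e (a + 1) * h (n + 1 - (a + 1))
        = -((-1 : R) ^ a * e (a + 1) * h (n - a)) := by
      intro a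
      have : n + 1 - (a + 1) = n - a := by omega
      rw [this, pow_succ]; ring
    rw [Finset.sum_congr rfl (fun a _ => step a), Finset.sum_neg_distrib] at H
    linear_combination H
  -- strong induction
  have main : ∀ r, h r = D r := by
    intro r
    induction r using Nat.strong_induction_on with
    | _ r ih =>
      match r with
      | 0 => rw [h0, Ddef]; exact Matrix.det_fin_zero.symm
      | Nat.succ n =>
        rw [hrec n, Drec n]
        exact Finset.sum_congr rfl fun a ha => by rw [ih (n - a) (by omega)]
  intro r _
  exact main r
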